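/- arXiv:1509.00447 — 3 statements merged into one kernel-verified Lean document; each statement's English description precedes it below -/
import Mathlib

section
/- The space S^{m,p} of L_p-type fuzzy star-shaped numbers (those u ∈ S̃^{m,p} with ⋂_{α∈(0,1]} ker [u]_α ≠ ∅) is a closed subset of (S̃^{m,p}, d_p). Moreover, if u_n ∈ S^{m,p} converge to u ∈ S̃^{m,p} in d_p, then u ∈ S^{m,p} and limsup_{n→∞} ker u_n ⊆ ker u, where ker v = ⋂_{α∈(0,1]} ker [v]_α. -/
open Metric Set MeasureTheory Filter

noncomputable section

/-- `Em m` is the Euclidean space ℝ^m. -/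
abbrev Em (m : ℕ) := EuclideanSpace ℝ (Fin m)

/-- A set is star-shaped if it contains a point `x` such that the segment from `x`
to any point of the set lies in the set. -/
def StarShaped {m : ℕ} (K : Set (Em m)) : Prop :=
  ∃ x ∈ K, ∀ y ∈ K, segment ℝ x y ⊆ K

/-- The kernel of a set: all points seeing the whole set. -/
def kern {m : ℕ} (K : Set (Em m)) : Set (Em m) :=
  {x | x ∈ K ∧ ∀ y ∈ K, segment ℝ x y ⊆ K}

/-- Kuratowski upper limit of a sequence of sets. -/
def KLimsup {m : ℕ} (C : ℕ → Set (Em m)) : Set (Em m) :=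
  ⋂ n : ℕ, closure (⋃ k : ℕ, ⋃ _ : n ≤ k, C k)

/-- Kuratowski lower limit of a sequence of sets. -/
def KLiminf {m : ℕ} (C : ℕ → Set (Em m)) : Set (Em m) :=
  {x | ∃ f : ℕ → Em m, (∀ n, f n ∈ C n) ∧ Tendsto f atTop (nhds x)}

/-- The α-cut of a fuzzy set `u`, for α > 0. -/
def acut {m : ℕ} (u : Em m → ℝ) (a : ℝ) : Set (Em m) := {x | a ≤ u x}

/-- The support (0-cut) of a fuzzy set. -/
def fsupp {m : ℕ} (u : Em m → ℝ) : Set (Em m) := closure {x | 0 < u x}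

/-- Membership in `F_B(ℝ^m)^p`: normal, upper semi-continuous fuzzy sets with
compact α-cuts for α ∈ (0,1] and α ↦ H([u]_α, {0})^p integrable on (0,1]. -/
structure IsFuzzyBp {m : ℕ} (p : ℝ) (u : Em m → ℝ) : Prop where
  mem01 : ∀ x, u x ∈ Icc (0:ℝ) 1
  normal : ∃ x, u x = 1
  usc : UpperSemicontinuous u
  compactCuts : ∀ a ∈ Ioc (0:ℝ) 1, IsCompact (acut u a)
  lp : IntegrableOn (fun a => hausdorffDist (acut u a) ({0} : Set (Em m)) ^ p)
        (Ioc (0:ℝ) 1)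

/-- Membership in `F_B(ℝ^m)`: normal, upper semi-continuous fuzzy sets with
bounded (hence compact closed) support. -/
structure IsFuzzyB {m : ℕ} (u : Em m → ℝ) : Prop where
  mem01 : ∀ x, u x ∈ Icc (0:ℝ) 1
  normal : ∃ x, u x = 1
  usc : UpperSemicontinuous u
  bddSupp : Bornology.IsBounded {x | 0 < u x}

/-- The `d_p` metric on fuzzy sets. -/
def dp {m : ℕ} (p : ℝ) (u v : Em m → ℝ) : ℝ :=
  (∫ a in Ioc (0:ℝ) 1, hausdorffDist (acut u a) (acut v a) ^ p) ^ (1/p)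

/-- `d_p` distance to the crisp origin `0̂`. -/
def dpOrigin {m : ℕ} (p : ℝ) (u : Em m → ℝ) : ℝ :=
  (∫ a in Ioc (0:ℝ) 1, hausdorffDist (acut u a) ({0} : Set (Em m)) ^ p) ^ (1/p)

/-- Uniformly p-mean bounded family. -/
def UPMB {m : ℕ} (p : ℝ) (U : Set (Em m → ℝ)) : Prop :=
  ∃ M : ℝ, ∀ u ∈ U, dpOrigin p u ≤ M

/-- p-mean equi-left-continuous family. -/
def PMELC {m : ℕ} (p : ℝ) (U : Set (Em m → ℝ)) : Prop :=
  ∀ ε > (0:ℝ), ∃ δ > (0:ℝ), ∀ h : ℝ, 0 ≤ h → h < δ → ∀ u ∈ U,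
    (∫ a in Ioc h 1, hausdorffDist (acut u a) (acut u (a - h)) ^ p) ^ (1/p) < ε

/-- Truncation `u^{(a)}` of a fuzzy set at level `a`. -/
def ftrunc {m : ℕ} (u : Em m → ℝ) (a : ℝ) : Em m → ℝ :=
  fun x => if a ≤ u x then u x else 0

/-- The kernel of a fuzzy set: intersection of the kernels of its cuts. -/
def fker {m : ℕ} (u : Em m → ℝ) : Set (Em m) :=
  ⋂ a ∈ Ioc (0:ℝ) 1, kern (acut u a)

/-- The full cut-family of a fuzzy set, with the 0-cut being the support. -/
def cutF {m : ℕ} (u : Em m → ℝ) (a : ℝ) : Set (Em m) :=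
  if a = 0 then fsupp u else acut u a

/-- Conditions (i)–(iv) of the representation theorem for `F_B(ℝ^m)^p`. -/
def GoodFamily {m : ℕ} (p : ℝ) (v : ℝ → Set (Em m)) : Prop :=
  (∀ l ∈ Ioc (0:ℝ) 1, (v l).Nonempty ∧ IsCompact (v l)) ∧
  (∀ l ∈ Ioc (0:ℝ) 1, v l = ⋂ g ∈ Ico (0:ℝ) l, v g) ∧
  (v 0 = closure (⋃ g ∈ Ioc (0:ℝ) 1, v g)) ∧
  IntegrableOn (fun a => hausdorffDist (v a) ({0} : Set (Em m)) ^ p) (Ioc (0:ℝ) 1)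


section AuxStarShaped

variable {m : ℕ} {p : ℝ}

lemma acut_anti (w : Em m → ℝ) {a b : ℝ} (hba : b ≤ a) : acut w a ⊆ acut w b :=
  fun x hx => le_trans hba hx

lemma acut_ne (hw : IsFuzzyBp p w) {a : ℝ} (ha : a ∈ Ioc (0:ℝ) 1) : (acut w a).Nonempty := by
  obtain ⟨x, hx⟩ := hw.normal
  exact ⟨x, by simp [acut, hx, ha.2]⟩

lemma cut_fin (hw : IsFuzzyBp p w) (hw' : IsFuzzyBp p w')
    {a b : ℝ} (ha : a ∈ Ioc (0:ℝ) 1) (hb : b ∈ Ioc (0:ℝ) 1) :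
    EMetric.hausdorffEdist (acut w a) (acut w' b) ≠ ⊤ :=
  hausdorffEdist_ne_top_of_nonempty_of_bounded (acut_ne hw ha) (acut_ne hw' hb)
    (hw.compactCuts a ha).isBounded (hw'.compactCuts b hb).isBounded

lemma hD_mono_nested {t s s' : Set (Em m)} (hts : t ⊆ s) (hss : s ⊆ s')
    (fin : EMetric.hausdorffEdist s' t ≠ ⊤) : hausdorffDist s t ≤ hausdorffDist s' t := by
  apply hausdorffDist_le_of_infDist hausdorffDist_nonneg
  · exact fun x hx => infDist_le_hausdorffDist_of_mem (hss hx) fin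
  · intro y hy
    rw [infDist_zero_of_mem (hts hy)]
    exact hausdorffDist_nonneg

lemma exists_cut_close (hw : IsFuzzyBp p w) {a : ℝ} (ha : a ∈ Ioc (0:ℝ) 1)
    {ε : ℝ} (hε : 0 < ε) :
    ∃ b, 0 < b ∧ b < a ∧ hausdorffDist (acut w b) (acut w a) ≤ ε := by
  by_contra hcon
  push_neg at hcon
  set b : ℕ → ℝ := fun j => a - a / (2 * (j + 1)) with hb
  have hbpos : ∀ j, 0 < b j := by
    intro j
    have h1 : a / (2 * (j + 1)) < a := by
      apply div_lt_self ha.1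
      have : (0:ℝ) < (j:ℝ) + 1 := by positivity
      nlinarith
    simp only [hb]; linarith
  have hblt : ∀ j, b j < a := by
    intro j
    have : 0 < a / (2 * ((j:ℝ) + 1)) := div_pos ha.1 (by positivity)
    simp only [hb]; linarith
  have hbmono : Monotone b := by
    intro i j hij
    have h2 : (0:ℝ) < 2 * ((i:ℝ) + 1) := by positivity
    have h3 : 2 * ((i:ℝ) + 1) ≤ 2 * ((j:ℝ) + 1) := by
      have : (i:ℝ) ≤ (j:ℝ) := Nat.cast_le.2 hij
      linarith
    have := div_le_div_of_nonneg_left (le_of_lt ha.1) h2 h3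
    simp only [hb]; linarith
  have hbmem : ∀ j, b j ∈ Ioc (0:ℝ) 1 := fun j => ⟨hbpos j, le_trans (hblt j).le ha.2⟩
  have hbtend : Tendsto b atTop (nhds a) := by
    have h0 : Tendsto (fun j : ℕ => a / (2 * ((j:ℝ) + 1))) atTop (nhds 0) := by
      have := tendsto_one_div_add_atTop_nhds_zero_nat (𝕜 := ℝ)
      have h2 : (fun j : ℕ => a / (2 * ((j:ℝ) + 1))) = fun j : ℕ => (a/2) * (1 / ((j:ℝ)+1)) := by
        funext j; rw [mul_one_div, div_div]
      rw [h2]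
      simpa using (this.const_mul (a/2))
    have := (tendsto_const_nhds (x := a) (f := atTop (α := ℕ))).sub h0
    simpa using this
  -- for each j, pick a bad point
  have hbad : ∀ j, ∃ x ∈ acut w (b j), ε < infDist x (acut w a) := by
    intro j
    by_contra hc
    push_neg at hc
    have := hcon (b j) (hbpos j) (hblt j)
    apply absurd (hausdorffDist_le_of_infDist hε.le hc ?_) (not_le.2 this)
    intro y hy
    rw [infDist_zero_of_mem (acut_anti w (hblt j).le hy)]
    exact hε.le
  choose x hx hdx using hbad
  have hxK : ∀ j, x j ∈ acut w (b 0) := fun j => acut_anti w (hbmono (Nat.zero_le j)) (hx j)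
  obtain ⟨z, hz, ρ, hρ, hzt⟩ := (hw.compactCuts (b 0) (hbmem 0)).tendsto_subseq hxK
  -- z belongs to every acut w (b j)
  have hzj : ∀ j, z ∈ acut w (b j) := by
    intro j
    have hcl : IsClosed (acut w (b j)) := (hw.compactCuts (b j) (hbmem j)).isClosed
    apply hcl.mem_of_tendsto hzt
    filter_upwards [eventually_ge_atTop j] with l hl
    exact acut_anti w (hbmono (le_trans hl (hρ.le_apply))) (hx (ρ l))
  have hza : z ∈ acut w a := by
    have : a ≤ w z := le_of_tendsto hbtend (Eventually.of_forall (fun j => hzj j))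
    exact this
  have h1 : Tendsto (fun l => infDist (x (ρ l)) (acut w a)) atTop (nhds (infDist z (acut w a))) :=
    ((continuous_infDist_pt (acut w a)).continuousAt).tendsto.comp hzt
  have h2 : ε ≤ infDist z (acut w a) :=
    ge_of_tendsto h1 (Eventually.of_forall (fun l => (hdx (ρ l)).le))
  rw [infDist_zero_of_mem hza] at h2
  linarith

lemma tendsto_H_left {w w' : Em m → ℝ} (hw : IsFuzzyBp p w) (hw' : IsFuzzyBp p w')
    {a : ℝ} (ha : a ∈ Ioc (0:ℝ) 1) {r : ℕ → ℝ} (hr1 : ∀ k, r k ≤ a)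
    (hr : Tendsto r atTop (nhds a)) :
    Tendsto (fun k => hausdorffDist (acut w (r k)) (acut w' (r k))) atTop
      (nhds (hausdorffDist (acut w a) (acut w' a))) := by
  rw [Metric.tendsto_atTop]
  intro ε hε
  obtain ⟨b1, hb1, hb1a, hH1⟩ := exists_cut_close hw ha (by linarith : (0:ℝ) < ε/4)
  obtain ⟨b2, hb2, hb2a, hH2⟩ := exists_cut_close hw' ha (by linarith : (0:ℝ) < ε/4)
  have hb1m : b1 ∈ Ioc (0:ℝ) 1 := ⟨hb1, le_trans hb1a.le ha.2⟩
  have hb2m : b2 ∈ Ioc (0:ℝ) 1 := ⟨hb2, le_trans hb2a.le ha.2⟩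
  set c := max b1 b2 with hc
  have hca : c < a := max_lt hb1a hb2a
  have hev : ∀ᶠ k in atTop, c < r k := hr.eventually (eventually_gt_nhds hca)
  rw [eventually_atTop] at hev
  obtain ⟨N, hN⟩ := hev
  refine ⟨N, fun k hk => ?_⟩
  have hck : c < r k := hN k hk
  have hrk : r k ∈ Ioc (0:ℝ) 1 :=
    ⟨lt_trans (lt_of_lt_of_le hb1 (le_max_left b1 b2)) hck, le_trans (hr1 k) ha.2⟩
  have dAr : hausdorffDist (acut w (r k)) (acut w a) ≤ ε/4 := by
    refine le_trans (hD_mono_nested (acut_anti w (hr1 k)) (acut_anti w ((le_max_left b1 b2).trans hck.le)) (cut_fin hw hw hb1m ha)) hH1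
  have dBr : hausdorffDist (acut w' (r k)) (acut w' a) ≤ ε/4 := by
    refine le_trans (hD_mono_nested (acut_anti w' (hr1 k)) (acut_anti w' ((le_max_right b1 b2).trans hck.le)) (cut_fin hw' hw' hb2m ha)) hH2
  have t1 : hausdorffDist (acut w (r k)) (acut w' (r k)) ≤
      hausdorffDist (acut w (r k)) (acut w a) + hausdorffDist (acut w a) (acut w' a)
        + hausdorffDist (acut w' a) (acut w' (r k)) := by
    have i1 := hausdorffDist_triangle (s := acut w (r k)) (t := acut w a)
      (u := acut w' (r k)) (cut_fin hw hw hrk ha)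
    have i2 := hausdorffDist_triangle (s := acut w a) (t := acut w' a)
      (u := acut w' (r k)) (cut_fin hw hw' ha ha)
    linarith
  have t2 : hausdorffDist (acut w a) (acut w' a) ≤
      hausdorffDist (acut w (r k)) (acut w a) + hausdorffDist (acut w (r k)) (acut w' (r k))
        + hausdorffDist (acut w' a) (acut w' (r k)) := by
    have i1 := hausdorffDist_triangle (s := acut w a) (t := acut w (r k))
      (u := acut w' a) (cut_fin hw hw ha hrk)
    have i2 := hausdorffDist_triangle (s := acut w (r k)) (t := acut w' (r k))
      (u := acut w' a) (cut_fin hw hw' hrk hrk)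
    have c1 : hausdorffDist (acut w a) (acut w (r k)) = hausdorffDist (acut w (r k)) (acut w a) :=
      hausdorffDist_comm
    have c2 : hausdorffDist (acut w' (r k)) (acut w' a) = hausdorffDist (acut w' a) (acut w' (r k)) :=
      hausdorffDist_comm
    linarith
  have c3 : hausdorffDist (acut w' a) (acut w' (r k)) = hausdorffDist (acut w' (r k)) (acut w' a) :=
    hausdorffDist_comm
  rw [Real.dist_eq, abs_sub_lt_iff]
  constructor <;> linarith

lemma H_aemeas {w w' : Em m → ℝ} (hw : IsFuzzyBp p w) (hw' : IsFuzzyBp p w') :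
    AEMeasurable (fun a => hausdorffDist (acut w a) (acut w' a))
      (volume.restrict (Ioc (0:ℝ) 1)) := by
  set g : ℝ → ℝ := fun a => hausdorffDist (acut w a) (acut w' a) with hg
  set f : ℕ → ℝ → ℝ := fun k a => g ((⌊a * (k+1)⌋ : ℝ) / (k+1)) with hf
  have hfm : ∀ k, Measurable (f k) := by
    intro k
    have h1 : Measurable (fun a : ℝ => ⌊a * ((k:ℝ)+1)⌋) :=
      Int.measurable_floor.comp (measurable_id.mul_const _)
    exact (measurable_of_countable (fun j : ℤ => g ((j:ℝ) / (k+1)))).comp h1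
  apply aemeasurable_of_tendsto_metrizable_ae atTop (fun k => (hfm k).aemeasurable)
  filter_upwards [ae_restrict_mem measurableSet_Ioc] with a ha
  set r : ℕ → ℝ := fun k => (⌊a * (k+1)⌋ : ℝ) / (k+1) with hrdef
  have hkpos : ∀ k : ℕ, (0:ℝ) < (k:ℝ) + 1 := fun k => by positivity
  have hr1 : ∀ k, r k ≤ a := by
    intro k
    rw [hrdef, div_le_iff₀ (hkpos k)]
    exact Int.floor_le _
  have hr2 : ∀ k : ℕ, a - 1 / ((k:ℝ)+1) ≤ r k := by
    intro k
    rw [hrdef, le_div_iff₀ (hkpos k), sub_mul, div_mul_cancel₀]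
    · linarith [Int.sub_one_lt_floor (a * ((k:ℝ)+1))]
    · exact (hkpos k).ne'
  have hrt : Tendsto r atTop (nhds a) := by
    apply tendsto_of_tendsto_of_tendsto_of_le_of_le (g := fun k : ℕ => a - 1/((k:ℝ)+1))
      (h := fun _ : ℕ => a) ?_ tendsto_const_nhds hr2 hr1
    have := tendsto_one_div_add_atTop_nhds_zero_nat (𝕜 := ℝ)
    have h2 := (tendsto_const_nhds (x := a) (f := atTop (α := ℕ))).sub this
    simpa using h2
  exact tendsto_H_left hw hw' ha hr1 hrt

lemma Hp_dom (hp : 1 ≤ p) {w w' : Em m → ℝ} (hw : IsFuzzyBp p w) (hw' : IsFuzzyBp p w')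
    {a : ℝ} (ha : a ∈ Ioc (0:ℝ) 1) :
    hausdorffDist (acut w a) (acut w' a) ^ p ≤
      2 ^ p * (hausdorffDist (acut w a) ({0} : Set (Em m)) ^ p
        + hausdorffDist (acut w' a) ({0} : Set (Em m)) ^ p) := by
  have hp0 : (0:ℝ) ≤ p := by linarith
  set h1 := hausdorffDist (acut w a) ({0} : Set (Em m)) with hh1
  set h2 := hausdorffDist (acut w' a) ({0} : Set (Em m)) with hh2
  have fin1 : EMetric.hausdorffEdist (acut w a) ({0} : Set (Em m)) ≠ ⊤ :=
    hausdorffEdist_ne_top_of_nonempty_of_bounded (acut_ne hw ha) (singleton_nonempty 0)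
      (hw.compactCuts a ha).isBounded Bornology.isBounded_singleton
  have fin2 : EMetric.hausdorffEdist ({0} : Set (Em m)) (acut w' a) ≠ ⊤ := by
    rw [EMetric.hausdorffEdist, EMetric.hausdorffEdist_comm]
    exact hausdorffEdist_ne_top_of_nonempty_of_bounded (acut_ne hw' ha) (singleton_nonempty 0)
      (hw'.compactCuts a ha).isBounded Bornology.isBounded_singleton
  have htri : hausdorffDist (acut w a) (acut w' a) ≤ h1 + h2 := by
    have := hausdorffDist_triangle (s := acut w a) (t := ({0} : Set (Em m)))
      (u := acut w' a) fin1
    simpa [hh1, hh2, hausdorffDist_comm] using this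
  have h1n : 0 ≤ h1 := hausdorffDist_nonneg
  have h2n : 0 ≤ h2 := hausdorffDist_nonneg
  calc hausdorffDist (acut w a) (acut w' a) ^ p ≤ (h1 + h2) ^ p :=
        Real.rpow_le_rpow hausdorffDist_nonneg htri hp0
    _ ≤ (2 * max h1 h2) ^ p := by
        apply Real.rpow_le_rpow (by linarith) ?_ hp0
        rcases le_total h1 h2 with hc | hc
        · rw [max_eq_right hc]; linarith
        · rw [max_eq_left hc]; linarith
    _ = 2 ^ p * max h1 h2 ^ p := Real.mul_rpow (by norm_num) (le_max_of_le_left h1n)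
    _ ≤ 2 ^ p * (h1 ^ p + h2 ^ p) := by
        apply mul_le_mul_of_nonneg_left ?_ (Real.rpow_nonneg (by norm_num) p)
        rcases le_total h1 h2 with hc | hc
        · rw [max_eq_right hc]
          have := Real.rpow_nonneg h1n p
          linarith
        · rw [max_eq_left hc]
          have := Real.rpow_nonneg h2n p
          linarith

lemma Hp_integrable (hp : 1 ≤ p) {w w' : Em m → ℝ} (hw : IsFuzzyBp p w) (hw' : IsFuzzyBp p w') :
    IntegrableOn (fun a => hausdorffDist (acut w a) (acut w' a) ^ p) (Ioc (0:ℝ) 1) := by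
  have hmeas : AEStronglyMeasurable (fun a => hausdorffDist (acut w a) (acut w' a) ^ p)
      (volume.restrict (Ioc (0:ℝ) 1)) := by
    have := (Real.continuous_rpow_const (by linarith : (0:ℝ) ≤ p)).measurable.comp_aemeasurable
      (H_aemeas hw hw')
    exact this.aestronglyMeasurable
  have hdom := (hw.lp.add hw'.lp).const_mul ((2:ℝ) ^ p)
  apply Integrable.mono' hdom hmeas
  filter_upwards [ae_restrict_mem measurableSet_Ioc] with a ha
  rw [Real.norm_eq_abs, abs_of_nonneg (Real.rpow_nonneg hausdorffDist_nonneg p)]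
  exact Hp_dom hp hw hw' ha

lemma lint_tendsto (hp : 1 ≤ p) {u : ℕ → Em m → ℝ} {v : Em m → ℝ}
    (hu : ∀ n, IsFuzzyBp p (u n)) (hv : IsFuzzyBp p v)
    (h : Tendsto (fun n => dp p (u n) v) atTop (nhds 0)) :
    Tendsto (fun n => ∫⁻ a in Ioc (0:ℝ) 1,
      ENNReal.ofReal (hausdorffDist (acut (u n) a) (acut v a) ^ p)) atTop (nhds 0) := by
  have hp0 : (0:ℝ) < p := by linarith
  set I : ℕ → ℝ := fun n => ∫ a in Ioc (0:ℝ) 1, hausdorffDist (acut (u n) a) (acut v a) ^ p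
    with hI
  have hIn : ∀ n, 0 ≤ I n := fun n =>
    setIntegral_nonneg measurableSet_Ioc (fun a _ => Real.rpow_nonneg hausdorffDist_nonneg p)
  have hIeq : ∀ n, I n = dp p (u n) v ^ p := by
    intro n
    rw [dp, ← Real.rpow_mul (hIn n), one_div, inv_mul_cancel₀ hp0.ne', Real.rpow_one]
  have hIt : Tendsto I atTop (nhds 0) := by
    have hcont : ContinuousAt (fun x : ℝ => x ^ p) 0 :=
      Real.continuousAt_rpow_const 0 p (Or.inr hp0.le)
    have := hcont.tendsto.comp h
    rw [Real.zero_rpow hp0.ne'] at this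
    have heq2 : I = (fun x : ℝ => x ^ p) ∘ fun n => dp p (u n) v := funext hIeq
    rw [heq2]
    exact this
  have heq : ∀ n, (∫⁻ a in Ioc (0:ℝ) 1,
      ENNReal.ofReal (hausdorffDist (acut (u n) a) (acut v a) ^ p)) = ENNReal.ofReal (I n) := by
    intro n
    rw [ofReal_integral_eq_lintegral_ofReal (Hp_integrable hp (hu n) hv)
      (ae_of_all _ (fun a => Real.rpow_nonneg hausdorffDist_nonneg p))]
  simp only [heq]
  have := ENNReal.tendsto_ofReal hIt
  simpa using this

lemma ae_freq (hp : 1 ≤ p) {u : ℕ → Em m → ℝ} {v : Em m → ℝ}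
    (hu : ∀ n, IsFuzzyBp p (u n)) (hv : IsFuzzyBp p v)
    (hlt : Tendsto (fun n => ∫⁻ a in Ioc (0:ℝ) 1,
      ENNReal.ofReal (hausdorffDist (acut (u n) a) (acut v a) ^ p)) atTop (nhds 0))
    {φ : ℕ → ℕ} (hφ : Tendsto φ atTop atTop) :
    ∀ᵐ a ∂(volume.restrict (Ioc (0:ℝ) 1)), ∀ ε > (0:ℝ), ∃ᶠ j in atTop,
      hausdorffDist (acut (u (φ j)) a) (acut v a) < ε := by
  have hp0 : (0:ℝ) < p := by linarith
  set μ := volume.restrict (Ioc (0:ℝ) 1) with hμ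
  set G : ℕ → ℝ → ENNReal := fun j a =>
    ENNReal.ofReal (hausdorffDist (acut (u (φ j)) a) (acut v a) ^ p) with hG
  have hm : ∀ j, AEMeasurable (G j) μ := by
    intro j
    exact ENNReal.measurable_ofReal.comp_aemeasurable
      ((Real.continuous_rpow_const hp0.le).measurable.comp_aemeasurable
        (H_aemeas (hu (φ j)) hv))
  have hGt : Tendsto (fun j => ∫⁻ a, G j a ∂μ) atTop (nhds 0) := hlt.comp hφ
  have hlim0 : ∫⁻ a, liminf (fun j => G j a) atTop ∂μ = 0 := by
    apply le_antisymm _ zero_le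
    calc ∫⁻ a, liminf (fun j => G j a) atTop ∂μ
        ≤ liminf (fun j => ∫⁻ a, G j a ∂μ) atTop := lintegral_liminf_le' hm
      _ = 0 := hGt.liminf_eq
  -- pass to measurable versions
  set G' : ℕ → ℝ → ENNReal := fun j => (hm j).mk with hG'
  have hG'm : ∀ j, Measurable (G' j) := fun j => (hm j).measurable_mk
  have hae : ∀ᵐ a ∂μ, ∀ j, G j a = G' j a := ae_all_iff.2 fun j => (hm j).ae_eq_mk
  have hlim0' : ∫⁻ a, liminf (fun j => G' j a) atTop ∂μ = 0 := by
    rw [← hlim0]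
    apply lintegral_congr_ae
    filter_upwards [hae] with a ha
    simp only [ha]
  have hze : ∀ᵐ a ∂μ, liminf (fun j => G' j a) atTop = 0 := by
    have := (lintegral_eq_zero_iff (Measurable.liminf hG'm)).1 hlim0'
    filter_upwards [this] with a ha
    exact ha
  filter_upwards [hze, hae] with a ha0 haeq
  intro ε hε
  by_contra hc
  rw [not_frequently] at hc
  have hev : ∀ᶠ j in atTop, ENNReal.ofReal (ε ^ p) ≤ G' j a := by
    filter_upwards [hc] with j hj
    rw [← haeq j]
    apply ENNReal.ofReal_le_ofReal
    exact Real.rpow_le_rpow hε.le (not_lt.1 hj) hp0.le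
  have hle : ENNReal.ofReal (ε ^ p) ≤ liminf (fun j => G' j a) atTop :=
    le_liminf_of_le (by isBoundedDefault) hev
  rw [ha0, nonpos_iff_eq_zero, ENNReal.ofReal_eq_zero] at hle
  exact absurd hle (not_le.2 (Real.rpow_pos_of_pos hε p))

lemma dist_combo {t1 t2 : ℝ} (ht1 : 0 ≤ t1) (ht2 : 0 ≤ t2) (a b c d : Em m) :
    dist (t1 • a + t2 • b) (t1 • c + t2 • d) ≤ t1 * dist a c + t2 * dist b d := by
  calc dist (t1 • a + t2 • b) (t1 • c + t2 • d)
      ≤ dist (t1 • a) (t1 • c) + dist (t2 • b) (t2 • d) := dist_add_add_le _ _ _ _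
    _ = t1 * dist a c + t2 * dist b d := by
        rw [dist_smul₀, dist_smul₀, Real.norm_of_nonneg ht1, Real.norm_of_nonneg ht2]

lemma kern_of_good (hp : 1 ≤ p) {u : ℕ → Em m → ℝ} {v : Em m → ℝ}
    (hu : ∀ n, IsFuzzyBp p (u n)) (hv : IsFuzzyBp p v)
    {φ : ℕ → ℕ} {y : ℕ → Em m} (hy : ∀ j, y j ∈ fker (u (φ j)))
    {x : Em m} (hyx : Tendsto y atTop (nhds x))
    {b : ℝ} (hb : b ∈ Ioc (0:ℝ) 1)
    (hgood : ∀ ε > (0:ℝ), ∃ᶠ j in atTop,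
      hausdorffDist (acut (u (φ j)) b) (acut v b) < ε) :
    x ∈ kern (acut v b) := by
  set K := acut v b with hK
  have hKc : IsCompact K := hv.compactCuts b hb
  have hKne : K.Nonempty := acut_ne hv hb
  -- main claim
  have hC : ∀ y' ∈ K, ∀ z ∈ segment ℝ x y', z ∈ K := by
    intro y' hy' z hz
    obtain ⟨t1, t2, ht1, ht2, htsum, htz⟩ := hz
    -- z has zero distance from K
    have hinf : ∀ ε > (0:ℝ), infDist z K ≤ 2 * ε := by
      intro ε hε
      have hev : ∀ᶠ j in atTop, dist (y j) x < ε := by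
        obtain ⟨N, hN⟩ := Metric.tendsto_atTop.1 hyx ε hε
        exact eventually_atTop.2 ⟨N, fun j hj => hN j hj⟩
      obtain ⟨j, hjH, hjd⟩ := ((hgood ε hε).and_eventually hev).exists
      set A := acut (u (φ j)) b with hA
      have hAc : IsCompact A := (hu (φ j)).compactCuts b hb
      have hAne : A.Nonempty := acut_ne (hu (φ j)) hb
      have hfin : EMetric.hausdorffEdist A K ≠ ⊤ := cut_fin (hu (φ j)) hv hb hb
      have hyk : y j ∈ kern A := by
        have := hy j
        rw [fker, mem_iInter₂] at this
        exact this b hb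
      -- find point in A near y'
      have hiy : infDist y' A ≤ hausdorffDist A K := by
        rw [hausdorffDist_comm]
        exact infDist_le_hausdorffDist_of_mem hy' (by rwa [EMetric.hausdorffEdist_comm])
      obtain ⟨w0, hw0A, hw0d⟩ := hAc.exists_infDist_eq_dist hAne y'
      have hdyw : dist y' w0 < ε := by rw [← hw0d]; exact lt_of_le_of_lt hiy hjH
      -- segment point in A
      have hsA : t1 • y j + t2 • w0 ∈ A :=
        hyk.2 w0 hw0A ⟨t1, t2, ht1, ht2, htsum, rfl⟩
      have hdz : dist z (t1 • y j + t2 • w0) ≤ ε := by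
        rw [← htz]
        calc dist (t1 • x + t2 • y') (t1 • y j + t2 • w0)
            ≤ t1 * dist x (y j) + t2 * dist y' w0 := dist_combo ht1 ht2 _ _ _ _
          _ ≤ t1 * ε + t2 * ε := by
              have h1 : dist x (y j) ≤ ε := by rw [dist_comm]; exact hjd.le
              exact add_le_add (mul_le_mul_of_nonneg_left h1 ht1)
                (mul_le_mul_of_nonneg_left hdyw.le ht2)
          _ = ε := by rw [← add_mul, htsum, one_mul]
      calc infDist z K ≤ infDist (t1 • y j + t2 • w0) K + dist z (t1 • y j + t2 • w0) :=
            infDist_le_infDist_add_dist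
        _ = dist z (t1 • y j + t2 • w0) + infDist (t1 • y j + t2 • w0) K := by ring
        _ ≤ ε + hausdorffDist A K := add_le_add hdz
            (infDist_le_hausdorffDist_of_mem hsA hfin)
        _ ≤ ε + ε := add_le_add le_rfl hjH.le
        _ = 2 * ε := by ring
    have hzero : infDist z K ≤ 0 := by
      apply le_of_forall_pos_le_add
      intro δ hδ
      have := hinf (δ/2) (by linarith)
      linarith
    have : infDist z K = 0 := le_antisymm hzero infDist_nonneg
    exact (hKc.isClosed.mem_iff_infDist_zero hKne).2 this
  obtain ⟨y0, hy0⟩ := hKne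
  have hxK : x ∈ K := hC y0 hy0 x (left_mem_segment ℝ x y0)
  exact ⟨hxK, fun y' hy' => fun z hz => hC y' hy' z hz⟩

lemma key (hp : 1 ≤ p) {u : ℕ → Em m → ℝ} {v : Em m → ℝ}
    (hu : ∀ n, IsFuzzyBp p (u n)) (hv : IsFuzzyBp p v)
    (hlt : Tendsto (fun n => ∫⁻ a in Ioc (0:ℝ) 1,
      ENNReal.ofReal (hausdorffDist (acut (u n) a) (acut v a) ^ p)) atTop (nhds 0))
    {φ : ℕ → ℕ} (hφ : Tendsto φ atTop atTop)
    {y : ℕ → Em m} (hy : ∀ j, y j ∈ fker (u (φ j)))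
    {x : Em m} (hyx : Tendsto y atTop (nhds x)) :
    x ∈ fker v := by
  have hae := ae_freq hp hu hv hlt hφ
  set P : ℝ → Prop := fun a => ∀ ε > (0:ℝ), ∃ᶠ j in atTop,
    hausdorffDist (acut (u (φ j)) a) (acut v a) < ε with hP
  -- density of good points
  have hdense : ∀ c α : ℝ, 0 ≤ c → c < α → α ≤ 1 → ∃ b, c < b ∧ b < α ∧ b ∈ Ioc (0:ℝ) 1 ∧ P b := by
    intro c α hc hcα hα1
    by_contra hcon
    push_neg at hcon
    have hsub : Ioo c α ⊆ {a | ¬ P a} := by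
      intro b hb
      intro hPb
      exact (hcon b hb.1 hb.2 ⟨lt_of_le_of_lt hc hb.1, le_trans hb.2.le hα1⟩) hPb
    have hnull : (volume.restrict (Ioc (0:ℝ) 1)) {a | ¬ P a} = 0 := by
      rw [← compl_setOf P] at *
      exact ae_iff.1 hae
    have h0 : (volume.restrict (Ioc (0:ℝ) 1)) (Ioo c α) = 0 :=
      measure_mono_null hsub hnull
    rw [Measure.restrict_apply' measurableSet_Ioc] at h0
    have hIoo : Ioo c α ∩ Ioc (0:ℝ) 1 = Ioo c α := by
      apply inter_eq_left.2
      intro b hb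
      exact ⟨lt_of_le_of_lt hc hb.1, le_trans hb.2.le hα1⟩
    rw [hIoo, Real.volume_Ioo] at h0
    exact absurd h0 (by simp [ENNReal.ofReal_eq_zero]; linarith)
  have hgoodkern : ∀ b, b ∈ Ioc (0:ℝ) 1 → P b → x ∈ kern (acut v b) :=
    fun b hb hPb => kern_of_good hp hu hv hy hyx hb hPb
  -- conclude for every α
  rw [fker, mem_iInter₂]
  intro α hα
  have hvx0 : ∀ z : Em m, 0 ≤ v z := fun z => (hv.mem01 z).1
  have hle : ∀ z : Em m, (∀ b, b ∈ Ioc (0:ℝ) 1 → P b → b < α → z ∈ acut v b) →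
      z ∈ acut v α := by
    intro z hz
    show α ≤ v z
    apply le_of_forall_lt
    intro c hcα
    rcases lt_or_ge c 0 with hc | hc
    · exact lt_of_lt_of_le hc (hvx0 z)
    · obtain ⟨b, hcb, hbα, hbm, hbP⟩ := hdense c α hc hcα hα.2
      exact lt_of_lt_of_le hcb (hz b hbm hbP hbα)
  have hxα : x ∈ acut v α :=
    hle x (fun b hbm hbP _ => (hgoodkern b hbm hbP).1)
  refine ⟨hxα, fun y' hy' z hz => ?_⟩
  apply hle z
  intro b hbm hbP hbα
  exact (hgoodkern b hbm hbP).2 y' (acut_anti v hbα.le hy') hz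

theorem aux_closed (hp : 1 ≤ p)
    (u : ℕ → Em m → ℝ) (v : Em m → ℝ)
    (hu : ∀ n, IsFuzzyBp p (u n))
    (huk : ∀ n, (fker (u n)).Nonempty)
    (hv : IsFuzzyBp p v)
    (h : Tendsto (fun n => dp p (u n) v) atTop (nhds 0)) :
    (fker v).Nonempty ∧ KLimsup (fun n => fker (u n)) ⊆ fker v := by
  have hlt := lint_tendsto hp hu hv h
  constructor
  · -- nonemptiness
    choose xs hxs using huk
    -- a good level b0
    have hae := ae_freq hp hu hv hlt (φ := id) tendsto_id
    have hmem := ae_restrict_mem (μ := volume) (s := Ioc (0:ℝ) 1) measurableSet_Ioc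
    have hne : (volume.restrict (Ioc (0:ℝ) 1)) ≠ 0 := by
      intro h0
      have := congrArg (fun μ : Measure ℝ => μ (Ioc (0:ℝ) 1)) h0
      simp [Measure.restrict_apply' measurableSet_Ioc, Real.volume_Ioc] at this
    have : ∀ᵐ a ∂(volume.restrict (Ioc (0:ℝ) 1)), a ∈ Ioc (0:ℝ) 1 ∧
        ∀ ε > (0:ℝ), ∃ᶠ j in atTop, hausdorffDist (acut (u j) a) (acut v a) < ε := by
      filter_upwards [hae, hmem] with a h1 h2
      exact ⟨h2, h1⟩
    have hNB : (MeasureTheory.ae (volume.restrict (Ioc (0:ℝ) 1))).NeBot :=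
      MeasureTheory.ae_neBot.2 hne
    obtain ⟨b0, hb0m, hb0P⟩ := this.exists
    -- subsequence with bounded H
    obtain ⟨ψ, hψm, hψH⟩ := extraction_of_frequently_atTop (hb0P 1 one_pos)
    -- points are in a fixed compact set
    set K := cthickening 1 (acut v b0) with hKdef
    have hKc : IsCompact K := (hv.compactCuts b0 hb0m).cthickening
    have hmemK : ∀ j, xs (ψ j) ∈ K := by
      intro j
      have hxA : xs (ψ j) ∈ acut (u (ψ j)) b0 := by
        have := hxs (ψ j)
        rw [fker, mem_iInter₂] at this
        exact (this b0 hb0m).1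
      have hfin : EMetric.hausdorffEdist (acut (u (ψ j)) b0) (acut v b0) ≠ ⊤ :=
        cut_fin (hu (ψ j)) hv hb0m hb0m
      have hi : infDist (xs (ψ j)) (acut v b0) ≤ 1 :=
        le_trans (infDist_le_hausdorffDist_of_mem hxA hfin) (hψH j).le
      obtain ⟨w, hwK, hwd⟩ := (hv.compactCuts b0 hb0m).exists_infDist_eq_dist
        (acut_ne hv hb0m) (xs (ψ j))
      exact Metric.mem_cthickening_of_dist_le (xs (ψ j)) w 1 _ hwK (by rw [← hwd]; exact hi)
    obtain ⟨x, hxK, ρ, hρm, hρt⟩ := hKc.tendsto_subseq hmemK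
    refine ⟨x, key hp hu hv hlt ((hψm.comp hρm).tendsto_atTop)
      (fun l => hxs (ψ (ρ l))) hρt⟩
  · -- KLimsup part
    intro x hx
    rw [KLimsup, mem_iInter] at hx
    have hsel : ∀ j : ℕ, ∃ z, (∃ k, j ≤ k ∧ z ∈ fker (u k)) ∧ dist x z < 1/(j+1) := by
      intro j
      have := Metric.mem_closure_iff.1 (hx j) (1/(j+1)) (by positivity)
      obtain ⟨z, hz1, hz2⟩ := this
      rw [mem_iUnion] at hz1
      obtain ⟨k, hk⟩ := hz1
      rw [mem_iUnion] at hk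
      obtain ⟨hjk, hzk⟩ := hk
      exact ⟨z, ⟨k, hjk, hzk⟩, hz2⟩
    choose z hz hzd using hsel
    choose k hk hzk using hz
    have hkt : Tendsto k atTop atTop := tendsto_atTop_mono hk tendsto_id
    have hzt : Tendsto z atTop (nhds x) := by
      rw [Metric.tendsto_atTop]
      intro ε hε
      obtain ⟨N, hN⟩ := exists_nat_one_div_lt hε
      refine ⟨N, fun j hj => ?_⟩
      rw [dist_comm]
      calc dist x (z j) < 1/(j+1) := hzd j
        _ ≤ 1/(N+1) := by
            apply div_le_div_of_nonneg_left one_pos.le (by positivity)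
            have : (N:ℝ) ≤ j := Nat.cast_le.2 hj
            linarith
        _ < ε := hN
    exact key hp hu hv hlt hkt hzk hzt


end AuxStarShaped

/-- `S^{m,p}` is closed in `(S̃^{m,p}, d_p)`: if `u n ∈ S^{m,p}`
converge in `d_p` to `v ∈ S̃^{m,p}`, then `v ∈ S^{m,p}` and the Kuratowski upper
limit of the kernels is contained in `ker v`. -/
theorem star_shaped_numbers_closed {m : ℕ} (p : ℝ) (hp : 1 ≤ p)
    (u : ℕ → Em m → ℝ) (v : Em m → ℝ)
    (hu : ∀ n, IsFuzzyBp p (u n))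
    (hus : ∀ n, ∀ a ∈ Ioc (0:ℝ) 1, StarShaped (acut (u n) a))
    (huk : ∀ n, (fker (u n)).Nonempty)
    (hv : IsFuzzyBp p v)
    (hvs : ∀ a ∈ Ioc (0:ℝ) 1, StarShaped (acut v a))
    (h : Tendsto (fun n => dp p (u n) v) atTop (nhds 0)) :
    (fker v).Nonempty ∧ KLimsup (fun n => fker (u n)) ⊆ fker v := by
  exact aux_closed hp u v hu huk hv h

end
end

section
/- The space E^{m,p} of L_p-type fuzzy numbers (u ∈ F_B(ℝ^m)^p with all α-cuts convex for α ∈ (0,1]) is a closed subset of (F_B(ℝ^m)^p, d_p). -/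
open Metric Set MeasureTheory Filter

noncomputable section

open Topology

lemma acut_mono {m : ℕ} {u : Em m → ℝ} {a b : ℝ} (h : a ≤ b) :
    acut u b ⊆ acut u a := fun x hx => le_trans h hx

/-- Left Hausdorff-continuity of the cut family: cuts slightly below `a` are in an
`ε`-thickening of the cut at `a`. -/
lemma cut_thickening {m : ℕ} {u : Em m → ℝ}
    (hc : ∀ b ∈ Ioc (0:ℝ) 1, IsCompact (acut u b))
    {a : ℝ} (ha : a ∈ Ioc (0:ℝ) 1) {ε : ℝ} (hε : 0 < ε) :
    ∃ b0 ∈ Ioo (0:ℝ) a, ∀ b ∈ Ioo b0 a, acut u b ⊆ thickening ε (acut u a) := by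
  obtain ⟨ha0, ha1⟩ := ha
  set lev : ℕ → ℝ := fun k => a - (a/2)/(k+1) with hlev
  have hlevmem : ∀ k, lev k ∈ Ioo (0:ℝ) a := by
    intro k
    constructor
    · have h1 : (a/2)/((k:ℝ)+1) ≤ a/2 := by
        apply div_le_self (by positivity)
        have hk0 : (0:ℝ) ≤ (k:ℝ) := Nat.cast_nonneg k
        have : (1:ℝ) ≤ (k:ℝ)+1 := by linarith
        linarith
      have : 0 < a - a/2 := by linarith
      simp only [hlev]; linarith
    · simp only [hlev]
      have : 0 < (a/2)/((k:ℝ)+1) := by positivity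
      linarith
  have hlevIoc : ∀ k, lev k ∈ Ioc (0:ℝ) 1 :=
    fun k => ⟨(hlevmem k).1, le_trans (hlevmem k).2.le ha1⟩
  have hlevmono : Monotone lev := by
    intro i j hij
    have : (a/2)/((j:ℝ)+1) ≤ (a/2)/((i:ℝ)+1) := by
      apply div_le_div_of_nonneg_left (by positivity) (by positivity)
      exact_mod_cast by exact_mod_cast add_le_add_left (Nat.cast_le.2 hij) 1
    simp only [hlev]; linarith
  set U : ℕ → Set (Em m) := fun k => acut u (lev k) \ thickening ε (acut u a) with hU
  by_cases hne : ∀ k, (U k).Nonempty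
  · exfalso
    have hUsub : ∀ k, U (k+1) ⊆ U k := by
      intro k
      exact diff_subset_diff_left (acut_mono (hlevmono (Nat.le_succ k)))
    have hUclosed : ∀ k, IsClosed (U k) :=
      fun k => ((hc _ (hlevIoc k)).isClosed).inter isOpen_thickening.isClosed_compl
    have hUcompact : IsCompact (U 0) :=
      (hc _ (hlevIoc 0)).of_isClosed_subset (hUclosed 0) diff_subset
    obtain ⟨x, hx⟩ := IsCompact.nonempty_iInter_of_sequence_nonempty_isCompact_isClosed
      U hUsub hne hUcompact hUclosed
    simp only [mem_iInter] at hx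
    have hxa : x ∈ acut u a := by
      have hlim : Tendsto lev atTop (𝓝 a) := by
        have : Tendsto (fun k : ℕ => (a/2)/((k:ℝ)+1)) atTop (𝓝 0) := by
          apply Tendsto.div_atTop tendsto_const_nhds
          exact tendsto_atTop_add_const_right _ _ tendsto_natCast_atTop_atTop
        simpa [hlev] using tendsto_const_nhds.sub this
      exact le_of_tendsto hlim (Eventually.of_forall fun k => (hx k).1)
    exact (hx 0).2 (self_subset_thickening hε _ hxa)
  · push_neg at hne
    obtain ⟨k, hk⟩ := hne
    have hk2 : acut u (lev k) ⊆ thickening ε (acut u a) := diff_eq_empty.mp hk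
    refine ⟨lev k, hlevmem k, fun b hb => ?_⟩
    exact subset_trans (acut_mono hb.1.le) hk2

/-- Hausdorff distance version of left continuity. -/
lemma cut_hdist {m : ℕ} {u : Em m → ℝ}
    (hc : ∀ b ∈ Ioc (0:ℝ) 1, IsCompact (acut u b))
    (hne : ∀ b ∈ Ioc (0:ℝ) 1, (acut u b).Nonempty)
    {a : ℝ} (ha : a ∈ Ioc (0:ℝ) 1) {ε : ℝ} (hε : 0 < ε) :
    ∃ b0 ∈ Ioo (0:ℝ) a, ∀ b ∈ Ioo b0 a,
      hausdorffDist (acut u b) (acut u a) ≤ ε := by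
  obtain ⟨b0, hb0, hthick⟩ := cut_thickening hc ha hε
  refine ⟨b0, hb0, fun b hb => ?_⟩
  apply hausdorffDist_le_of_mem_dist hε.le
  · intro x hx
    obtain ⟨z, hz, hdz⟩ := mem_thickening_iff.1 (hthick b hb hx)
    exact ⟨z, hz, hdz.le⟩
  · intro y hy
    exact ⟨y, acut_mono hb.2.le hy, by simp [hε.le]⟩

lemma hausdorffDist_abs_sub {m : ℕ} {A B A' B' : Set (Em m)}
    (hA : A.Nonempty) (hB : B.Nonempty) (hA' : A'.Nonempty) (hB' : B'.Nonempty)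
    (cA : Bornology.IsBounded A) (cB : Bornology.IsBounded B)
    (cA' : Bornology.IsBounded A') (cB' : Bornology.IsBounded B') :
    |hausdorffDist A B - hausdorffDist A' B'| ≤
      hausdorffDist A A' + hausdorffDist B B' := by
  have fin : ∀ (s t : Set (Em m)), s.Nonempty → t.Nonempty → Bornology.IsBounded s →
      Bornology.IsBounded t → EMetric.hausdorffEdist s t ≠ ⊤ := fun s t hs ht bs bt =>
    hausdorffEdist_ne_top_of_nonempty_of_bounded hs ht bs bt
  have h1 : hausdorffDist A B ≤ hausdorffDist A A' + hausdorffDist A' B :=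
    hausdorffDist_triangle (fin A A' hA hA' cA cA')
  have h2 : hausdorffDist A' B ≤ hausdorffDist A' B' + hausdorffDist B' B :=
    hausdorffDist_triangle (fin A' B' hA' hB' cA' cB')
  have h3 : hausdorffDist A' B' ≤ hausdorffDist A' A + hausdorffDist A B' :=
    hausdorffDist_triangle (fin A' A hA' hA cA' cA)
  have h4 : hausdorffDist A B' ≤ hausdorffDist A B + hausdorffDist B B' :=
    hausdorffDist_triangle (fin A B hA hB cA cB)
  have e1 : hausdorffDist B' B = hausdorffDist B B' := hausdorffDist_comm
  have e2 : hausdorffDist A' A = hausdorffDist A A' := hausdorffDist_comm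
  rw [abs_sub_le_iff]
  constructor <;> linarith


/-- Left continuity of `b ↦ H([u]_b, [v]_b)` at `a ∈ (0,1]`. -/
lemma G_left_cont {m : ℕ} {u v : Em m → ℝ}
    (hcu : ∀ b ∈ Ioc (0:ℝ) 1, IsCompact (acut u b))
    (hneu : ∀ b ∈ Ioc (0:ℝ) 1, (acut u b).Nonempty)
    (hcv : ∀ b ∈ Ioc (0:ℝ) 1, IsCompact (acut v b))
    (hnev : ∀ b ∈ Ioc (0:ℝ) 1, (acut v b).Nonempty)
    {a : ℝ} (ha : a ∈ Ioc (0:ℝ) 1) :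
    Tendsto (fun b => hausdorffDist (acut u b) (acut v b)) (𝓝[<] a)
      (𝓝 (hausdorffDist (acut u a) (acut v a))) := by
  rw [Metric.tendsto_nhds]
  intro ε hε
  have hε3 : 0 < ε/3 := by linarith
  obtain ⟨b0u, hb0u, hu3⟩ := cut_hdist hcu hneu ha hε3
  obtain ⟨b0v, hb0v, hv3⟩ := cut_hdist hcv hnev ha hε3
  have hb1 : max b0u b0v < a := max_lt hb0u.2 hb0v.2
  filter_upwards [Ioo_mem_nhdsLT_of_mem (⟨hb1, le_refl a⟩ : a ∈ Ioc (max b0u b0v) a)]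
    with b hb
  have hbu : b ∈ Ioo b0u a := ⟨lt_of_le_of_lt (le_max_left _ _) hb.1, hb.2⟩
  have hbv : b ∈ Ioo b0v a := ⟨lt_of_le_of_lt (le_max_right _ _) hb.1, hb.2⟩
  have hbIoc : b ∈ Ioc (0:ℝ) 1 :=
    ⟨lt_trans hb0u.1 hbu.1, le_trans hb.2.le ha.2⟩
  have habs := hausdorffDist_abs_sub (hneu _ hbIoc) (hnev _ hbIoc) (hneu _ ha) (hnev _ ha)
    (hcu _ hbIoc).isBounded (hcv _ hbIoc).isBounded (hcu _ ha).isBounded (hcv _ ha).isBounded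
  have h1 := hu3 b hbu
  have h2 := hv3 b hbv
  rw [Real.dist_eq]
  calc |hausdorffDist (acut u b) (acut v b) - hausdorffDist (acut u a) (acut v a)|
      ≤ hausdorffDist (acut u b) (acut u a) + hausdorffDist (acut v b) (acut v a) := habs
    _ ≤ ε/3 + ε/3 := add_le_add h1 h2
    _ < ε := by linarith

/-- The dyadic left approximation of `a`. -/
def dyad (k : ℕ) (a : ℝ) : ℝ := ((⌈a * 2^k⌉ : ℝ) - 1) / 2^k

lemma dyad_lt (k : ℕ) (a : ℝ) : dyad k a < a := by
  have h2 : (0:ℝ) < 2^k := by positivity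
  rw [dyad, div_lt_iff₀ h2]
  have := Int.ceil_lt_add_one (a * 2^k)
  linarith

lemma dyad_ge (k : ℕ) (a : ℝ) : a - (2⁻¹:ℝ)^k ≤ dyad k a := by
  have h2 : (0:ℝ) < 2^k := by positivity
  rw [dyad, le_div_iff₀ h2]
  have := Int.le_ceil (a * 2^k)
  have h3 : (a - (2⁻¹:ℝ)^k) * 2^k = a * 2^k - 1 := by
    field_simp
    rw [sub_mul, ← mul_pow]; norm_num
  rw [h3]; linarith

lemma dyad_tendsto (a : ℝ) : Tendsto (fun k => dyad k a) atTop (𝓝[<] a) := by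
  apply tendsto_nhdsWithin_of_tendsto_nhds_of_eventually_within
  · apply tendsto_of_tendsto_of_tendsto_of_le_of_le
      (g := fun k => a - (2⁻¹:ℝ)^k) (h := fun _ => a)
    · have : Tendsto (fun k : ℕ => (2⁻¹:ℝ)^k) atTop (𝓝 0) :=
        tendsto_pow_atTop_nhds_zero_of_lt_one (by norm_num) (by norm_num)
      simpa using tendsto_const_nhds.sub this
    · exact tendsto_const_nhds
    · exact fun k => dyad_ge k a
    · exact fun k => (dyad_lt k a).le
  · exact Eventually.of_forall fun k => dyad_lt k a

lemma dyad_measurable (k : ℕ) {f : ℝ → ℝ} : Measurable (fun a => f (dyad k a)) := by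
  have : (fun a => f (dyad k a)) =
      (fun j : ℤ => f (((j:ℝ) - 1)/2^k)) ∘ (fun a : ℝ => ⌈a * 2^k⌉) := rfl
  rw [this]
  exact (measurable_of_countable _).comp (Int.measurable_ceil.comp (measurable_id.mul_const _))

/-- Measurability of `a ↦ H([u]_a,[v]_a)` on `(0,1]`. -/
lemma G_aemeasurable {m : ℕ} {u v : Em m → ℝ}
    (hcu : ∀ b ∈ Ioc (0:ℝ) 1, IsCompact (acut u b))
    (hneu : ∀ b ∈ Ioc (0:ℝ) 1, (acut u b).Nonempty)
    (hcv : ∀ b ∈ Ioc (0:ℝ) 1, IsCompact (acut v b))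
    (hnev : ∀ b ∈ Ioc (0:ℝ) 1, (acut v b).Nonempty) :
    AEMeasurable (fun a => hausdorffDist (acut u a) (acut v a))
      (volume.restrict (Ioc (0:ℝ) 1)) := by
  set G : ℝ → ℝ := fun a => hausdorffDist (acut u a) (acut v a) with hG
  apply aemeasurable_of_tendsto_metrizable_ae (f := fun k a => G (dyad k a)) atTop
  · exact fun k => (dyad_measurable k).aemeasurable
  · rw [ae_restrict_iff' measurableSet_Ioc]
    apply ae_of_all
    intro a ha
    have h1 : Tendsto (fun k => dyad k a) atTop (𝓝[<] a) := dyad_tendsto a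
    exact (G_left_cont hcu hneu hcv hnev ha).comp h1


lemma add_rpow_le {x y p : ℝ} (hx : 0 ≤ x) (hy : 0 ≤ y) (hp : 0 ≤ p) :
    (x + y) ^ p ≤ 2 ^ p * (x ^ p + y ^ p) := by
  have hmax : x + y ≤ 2 * max x y := by
    rcases le_total x y with h | h
    · simp [max_eq_right h]; linarith
    · simp [max_eq_left h]; linarith
  have h0m : (0:ℝ) ≤ max x y := le_max_of_le_left hx
  calc (x + y) ^ p ≤ (2 * max x y) ^ p :=
        Real.rpow_le_rpow (by linarith) hmax hp
    _ = 2 ^ p * (max x y) ^ p := Real.mul_rpow (by norm_num) h0m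
    _ ≤ 2 ^ p * (x ^ p + y ^ p) := by
        apply mul_le_mul_of_nonneg_left _ (Real.rpow_nonneg (by norm_num) p)
        rcases le_total x y with h | h
        · rw [max_eq_right h]
          have : 0 ≤ x ^ p := Real.rpow_nonneg hx p
          linarith
        · rw [max_eq_left h]
          have : 0 ≤ y ^ p := Real.rpow_nonneg hy p
          linarith

/-- A Hausdorff limit of convex sets is convex (for a closed limit set at finite
Hausdorff e-distance). -/
lemma convex_of_hausdorff_lim {m : ℕ} {C : ℕ → Set (Em m)} {D : Set (Em m)}
    (hconv : ∀ k, Convex ℝ (C k)) (hDcl : IsClosed D)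
    (hfin : ∀ k, EMetric.hausdorffEdist (C k) D ≠ ⊤)
    (hH : Tendsto (fun k => hausdorffDist (C k) D) atTop (𝓝 0)) :
    Convex ℝ D := by
  intro x hx y hy t s ht hs hts
  have hmem : t • x + s • y ∈ closure D := by
    rw [Metric.mem_closure_iff]
    intro ε hε
    have hε3 : 0 < ε/3 := by linarith
    obtain ⟨k, hk'⟩ := (hH.eventually_lt_const hε3).exists
    have hfin' : EMetric.hausdorffEdist D (C k) ≠ ⊤ := by
      unfold EMetric.hausdorffEdist at hfin ⊢; rw [Metric.hausdorffEDist_comm]; exact hfin k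
    have hDk : hausdorffDist D (C k) < ε/3 := by
      rwa [hausdorffDist_comm]
    obtain ⟨x', hx', hdx⟩ := exists_dist_lt_of_hausdorffDist_lt hx hDk hfin'
    obtain ⟨y', hy', hdy⟩ := exists_dist_lt_of_hausdorffDist_lt hy hDk hfin'
    have hz' : t • x' + s • y' ∈ C k := hconv k hx' hy' ht hs hts
    obtain ⟨d, hd, hdd⟩ := exists_dist_lt_of_hausdorffDist_lt hz' hk' (hfin k)
    refine ⟨d, hd, ?_⟩
    have hd1 : dist (t • x + s • y) (t • x' + s • y') ≤
        t * dist x x' + s * dist y y' := by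
      calc dist (t • x + s • y) (t • x' + s • y')
          ≤ dist (t • x) (t • x') + dist (s • y) (s • y') := dist_add_add_le _ _ _ _
        _ = t * dist x x' + s * dist y y' := by
            rw [dist_smul₀, dist_smul₀, Real.norm_eq_abs, Real.norm_eq_abs,
              abs_of_nonneg ht, abs_of_nonneg hs]
    have hd2 : t * dist x x' + s * dist y y' ≤ ε/3 := by
      have h1 : t * dist x x' ≤ t * (ε/3) := by
        apply mul_le_mul_of_nonneg_left hdx.le ht
      have h2 : s * dist y y' ≤ s * (ε/3) := by
        apply mul_le_mul_of_nonneg_left hdy.le hs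
      have : t * (ε/3) + s * (ε/3) = ε/3 := by rw [← add_mul, hts]; ring
      linarith
    calc dist (t • x + s • y) d
        ≤ dist (t • x + s • y) (t • x' + s • y') + dist (t • x' + s • y') d :=
          dist_triangle _ _ _
      _ < ε/3 + ε/3 := by
          apply add_lt_add_of_le_of_lt (le_trans hd1 hd2) hdd
      _ < ε := by linarith
  rwa [hDcl.closure_eq] at hmem


lemma acut_nonempty {m : ℕ} {p : ℝ} {u : Em m → ℝ} (hu : IsFuzzyBp p u) :
    ∀ b ∈ Ioc (0:ℝ) 1, (acut u b).Nonempty := by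
  intro b hb
  obtain ⟨x, hx⟩ := hu.normal
  exact ⟨x, by simp [acut, hx, hb.2]⟩

/-- `E^{m,p}` is closed in `(F_B(ℝ^m)^p, d_p)`: a `d_p`-limit of
fuzzy sets with convex cuts has convex cuts. -/
theorem fuzzy_numbers_Lp_closed {m : ℕ} (p : ℝ) (hp : 1 ≤ p)
    (u : ℕ → Em m → ℝ) (v : Em m → ℝ)
    (hu : ∀ n, IsFuzzyBp p (u n))
    (huconv : ∀ n, ∀ a ∈ Ioc (0:ℝ) 1, Convex ℝ (acut (u n) a))
    (hv : IsFuzzyBp p v)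
    (h : Tendsto (fun n => dp p (u n) v) atTop (nhds 0)) :
    ∀ a ∈ Ioc (0:ℝ) 1, Convex ℝ (acut v a) := by
  have hp0 : (0:ℝ) < p := lt_of_lt_of_le one_pos hp
  have hpne : p ≠ 0 := hp0.ne'
  set μ : Measure ℝ := volume.restrict (Ioc (0:ℝ) 1) with hμ
  set g : ℕ → ℝ → ℝ :=
    fun n a => hausdorffDist (acut (u n) a) (acut v a) ^ p with hg
  have hgnonneg : ∀ n a, 0 ≤ g n a :=
    fun n a => Real.rpow_nonneg hausdorffDist_nonneg p
  -- measurability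
  have hGmeas : ∀ n, AEMeasurable
      (fun a => hausdorffDist (acut (u n) a) (acut v a)) μ := fun n =>
    G_aemeasurable (hu n).compactCuts (acut_nonempty (hu n)) hv.compactCuts
      (acut_nonempty hv)
  have hgmeas : ∀ n, AEMeasurable (g n) μ := by
    intro n
    exact (Real.continuous_rpow_const hp0.le).measurable.comp_aemeasurable (hGmeas n)
  -- integrability
  have hgint : ∀ n, Integrable (g n) μ := by
    intro n
    have hbound : Integrable (fun a =>
        2 ^ p * (hausdorffDist (acut (u n) a) ({0} : Set (Em m)) ^ p +
          hausdorffDist (acut v a) ({0} : Set (Em m)) ^ p)) μ :=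
      ((hu n).lp.add hv.lp).const_mul _
    apply Integrable.mono' hbound ((hgmeas n).aestronglyMeasurable)
    rw [hμ, ae_restrict_iff' measurableSet_Ioc]
    apply ae_of_all
    intro a ha
    rw [Real.norm_eq_abs, abs_of_nonneg (hgnonneg n a)]
    have hAne := acut_nonempty (hu n) a ha
    have hBne := acut_nonempty hv a ha
    have hAb := ((hu n).compactCuts a ha).isBounded
    have hBb := (hv.compactCuts a ha).isBounded
    have h0ne : ({0} : Set (Em m)).Nonempty := singleton_nonempty _
    have h0b : Bornology.IsBounded ({0} : Set (Em m)) := isCompact_singleton.isBounded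
    have htri : hausdorffDist (acut (u n) a) (acut v a) ≤
        hausdorffDist (acut (u n) a) ({0} : Set (Em m)) +
          hausdorffDist (acut v a) ({0} : Set (Em m)) := by
      have := hausdorffDist_triangle
        (t := ({0} : Set (Em m))) (s := acut (u n) a) (u := acut v a)
        (hausdorffEdist_ne_top_of_nonempty_of_bounded hAne h0ne hAb h0b)
      rwa [hausdorffDist_comm (s := ({0} : Set (Em m)))] at this
    calc g n a ≤ (hausdorffDist (acut (u n) a) ({0} : Set (Em m)) +
          hausdorffDist (acut v a) ({0} : Set (Em m))) ^ p :=
          Real.rpow_le_rpow hausdorffDist_nonneg htri hp0.le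
      _ ≤ 2 ^ p * (hausdorffDist (acut (u n) a) ({0} : Set (Em m)) ^ p +
          hausdorffDist (acut v a) ({0} : Set (Em m)) ^ p) :=
          add_rpow_le hausdorffDist_nonneg hausdorffDist_nonneg hp0.le
  -- integral tends to 0
  have hInt0 : Tendsto (fun n => ∫ a, g n a ∂μ) atTop (𝓝 0) := by
    have heq : ∀ n, ∫ a, g n a ∂μ = (dp p (u n) v) ^ p := by
      intro n
      rw [dp]
      have hI0 : 0 ≤ ∫ a in Ioc (0:ℝ) 1,
          hausdorffDist (acut (u n) a) (acut v a) ^ p :=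
        integral_nonneg (fun a => Real.rpow_nonneg hausdorffDist_nonneg p)
      rw [← Real.rpow_mul hI0, one_div_mul_cancel hpne, Real.rpow_one]
    simp_rw [heq]
    have hcont : ContinuousAt (fun x : ℝ => x ^ p) 0 :=
      Real.continuousAt_rpow_const 0 p (Or.inr hp0.le)
    have := hcont.tendsto.comp h
    rwa [Real.zero_rpow hpne] at this
  -- L1 convergence
  have hL1 : Tendsto (fun n => eLpNorm (g n - 0) 1 μ) atTop (𝓝 0) := by
    have heq : ∀ n, eLpNorm (g n - 0) 1 μ = ENNReal.ofReal (∫ a, g n a ∂μ) := by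
      intro n
      rw [sub_zero, eLpNorm_one_eq_lintegral_enorm,
        ofReal_integral_eq_lintegral_ofReal (hgint n)
          (ae_of_all _ fun a => hgnonneg n a)]
      congr 1
      ext a
      rw [← ofReal_norm, Real.norm_eq_abs, abs_of_nonneg (hgnonneg n a)]
    simp_rw [heq]
    have := (ENNReal.continuous_ofReal.tendsto 0).comp hInt0
    simpa [Function.comp_def] using this
  -- a.e. convergent subsequence
  have hTIM : TendstoInMeasure μ g atTop (0 : ℝ → ℝ) :=
    tendstoInMeasure_of_tendsto_eLpNorm one_ne_zero
      (fun n => (hgmeas n).aestronglyMeasurable) aestronglyMeasurable_zero hL1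
  obtain ⟨ns, hnsmono, hae⟩ := hTIM.exists_seq_tendsto_ae
  -- the good set
  set S : Set ℝ := {b | b ∈ Ioc (0:ℝ) 1 ∧
    Tendsto (fun i => g (ns i) b) atTop (𝓝 0)} with hS
  have hSdense : ∀ c a : ℝ, 0 ≤ c → c < a → a ≤ 1 → ∃ b ∈ S, c < b ∧ b < a := by
    intro c a hc hca ha1
    by_contra hcon
    push_neg at hcon
    have hsub : Ioo c a ⊆ {x | ¬ Tendsto (fun i => g (ns i) x) atTop (𝓝 0)} := by
      intro x hx hT
      have hxIoc : x ∈ Ioc (0:ℝ) 1 :=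
        mem_Ioc.mpr ⟨lt_of_le_of_lt hc hx.1, le_trans hx.2.le ha1⟩
      exact absurd (hcon x ⟨hxIoc, hT⟩ hx.1) (not_le.2 hx.2)
    have hμIoo : μ (Ioo c a) = 0 := by
      apply measure_mono_null hsub
      have : ∀ᵐ x ∂μ, Tendsto (fun i => g (ns i) x) atTop (𝓝 (0:ℝ)) := by
        filter_upwards [hae] with x hx
        simpa using hx
      rw [ae_iff] at this
      simpa using this
    have : μ (Ioo c a) = ENNReal.ofReal (a - c) := by
      rw [hμ, Measure.restrict_apply measurableSet_Ioo]
      rw [inter_eq_left.2 (fun x hx =>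
        mem_Ioc.mpr ⟨lt_of_le_of_lt hc hx.1, le_trans (le_of_lt hx.2) ha1⟩)]
      exact Real.volume_Ioo
    rw [this] at hμIoo
    have : a - c ≤ 0 := by
      by_contra hac
      push_neg at hac
      exact (ENNReal.ofReal_pos.2 hac).ne' hμIoo
    linarith
  -- cuts at good levels are convex
  have hSconv : ∀ b ∈ S, Convex ℝ (acut v b) := by
    intro b hb
    obtain ⟨hbIoc, hbT⟩ := hb
    have hHtend : Tendsto
        (fun i => hausdorffDist (acut (u (ns i)) b) (acut v b)) atTop (𝓝 0) := by
      have hcont : ContinuousAt (fun x : ℝ => x ^ (1/p)) 0 :=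
        Real.continuousAt_rpow_const 0 (1/p) (Or.inr (by positivity))
      have := hcont.tendsto.comp hbT
      rw [Real.zero_rpow (by positivity : (1:ℝ)/p ≠ 0)] at this
      have heq : ∀ i, (g (ns i) b) ^ (1/p) =
          hausdorffDist (acut (u (ns i)) b) (acut v b) := by
        intro i
        rw [hg]
        rw [← Real.rpow_mul hausdorffDist_nonneg, mul_one_div, div_self hpne,
          Real.rpow_one]
      have this2 : Tendsto (fun i => (g (ns i) b) ^ (1/p)) atTop (𝓝 0) := by
        simpa [Function.comp_def, one_div] using this
      exact this2.congr heq
    apply convex_of_hausdorff_lim (C := fun i => acut (u (ns i)) b)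
    · exact fun i => huconv (ns i) b hbIoc
    · exact (hv.compactCuts b hbIoc).isClosed
    · intro i
      exact hausdorffEdist_ne_top_of_nonempty_of_bounded
        (acut_nonempty (hu (ns i)) b hbIoc) (acut_nonempty hv b hbIoc)
        ((hu (ns i)).compactCuts b hbIoc).isBounded
        ((hv.compactCuts b hbIoc)).isBounded
    · exact hHtend
  -- conclude
  intro a ha
  have hrepr : acut v a = ⋂ b ∈ {b | b ∈ S ∧ b < a}, acut v b := by
    ext x
    simp only [mem_iInter, mem_setOf_eq]
    constructor
    · intro hx b hb
      exact acut_mono hb.2.le hx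
    · intro hx
      by_contra hlt
      have hvx : v x < a := not_le.1 hlt
      have hc : max (v x) 0 < a := max_lt hvx ha.1
      obtain ⟨b, hbS, hcb, hba⟩ := hSdense (max (v x) 0) a (le_max_right _ _) hc ha.2
      have : b ≤ v x := hx b ⟨hbS, hba⟩
      have : b ≤ max (v x) 0 := le_trans this (le_max_left _ _)
      linarith
  rw [hrepr]
  exact convex_iInter fun b => convex_iInter fun hb => hSconv b hb.1


end
end

section
/- Representation theorem for F_B(ℝ^m)^p: if a family {v_α : α ∈ [0,1]} of subsets of ℝ^m satisfies (i) v_λ is nonempty compact for λ ∈ (0,1], (ii) v_λ = ⋂_{γ<λ} v_γ for λ ∈ (0,1], (iii) v_0 = closure(⋃_{γ>0} v_γ), and (iv) (∫_0^1 H(v_α, {0})^p dα)^{1/p} < ∞, then there exists a unique u ∈ F_B(ℝ^m)^p with [u]_λ = v_λ for all λ ∈ [0,1]; conversely the family of cuts of any u ∈ F_B(ℝ^m)^p satisfies (i)–(iv). -/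
open Metric Set MeasureTheory Filter

noncomputable section

lemma fuzzy_le_of_cuts {m : ℕ} {u₁ u₂ : Em m → ℝ}
    (h1 : ∀ x, u₁ x ∈ Icc (0:ℝ) 1) (h2 : ∀ x, u₂ x ∈ Icc (0:ℝ) 1)
    (h : ∀ a ∈ Ioc (0:ℝ) 1, acut u₁ a ⊆ acut u₂ a) : ∀ x, u₁ x ≤ u₂ x := by
  intro x
  by_contra hlt
  push_neg at hlt
  have ha : u₁ x ∈ Ioc (0:ℝ) 1 := ⟨lt_of_le_of_lt (h2 x).1 hlt, (h1 x).2⟩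
  have := h _ ha (le_refl (u₁ x) : x ∈ acut u₁ (u₁ x))
  exact absurd this (not_le.2 hlt)

lemma fuzzy_eq_of_cuts {m : ℕ} {u₁ u₂ : Em m → ℝ}
    (h1 : ∀ x, u₁ x ∈ Icc (0:ℝ) 1) (h2 : ∀ x, u₂ x ∈ Icc (0:ℝ) 1)
    (h : ∀ a ∈ Ioc (0:ℝ) 1, acut u₁ a = acut u₂ a) : u₁ = u₂ :=
  funext fun x => le_antisymm
    (fuzzy_le_of_cuts h1 h2 (fun a ha => (h a ha).le) x)
    (fuzzy_le_of_cuts h2 h1 (fun a ha => (h a ha).ge) x)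

/-- Representation theorem for `F_B(ℝ^m)^p`: a family satisfying
(i)–(iv) is the cut-family of a unique element of `F_B(ℝ^m)^p`, and conversely
the cut-family of any element satisfies (i)–(iv). -/
theorem representation_theorem_fuzzyBp {m : ℕ} (p : ℝ) (hp : 1 ≤ p) :
    (∀ v : ℝ → Set (Em m), GoodFamily p v →
        ∃! u : Em m → ℝ, IsFuzzyBp p u ∧ ∀ a ∈ Icc (0:ℝ) 1, cutF u a = v a) ∧
    (∀ u : Em m → ℝ, IsFuzzyBp p u → GoodFamily p (cutF u)) := by
  constructor
  · -- existence and uniqueness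
    rintro v ⟨h1, h2, h3, h4⟩
    set S : Em m → Set ℝ := fun x => insert 0 {a | a ∈ Ioc (0:ℝ) 1 ∧ x ∈ v a} with hS
    set u : Em m → ℝ := fun x => sSup (S x) with hu
    have hbdd : ∀ x, BddAbove (S x) := by
      intro x
      refine ⟨1, ?_⟩
      rintro b (rfl | ⟨⟨_, hb1⟩, _⟩)
      · exact zero_le_one
      · exact hb1
    have hne : ∀ x, (S x).Nonempty := fun x => ⟨0, mem_insert 0 _⟩
    have h0le : ∀ x, 0 ≤ u x := fun x => le_csSup (hbdd x) (mem_insert 0 _)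
    have hle1 : ∀ x, u x ≤ 1 := by
      intro x
      refine csSup_le (hne x) ?_
      rintro b (rfl | ⟨⟨_, hb1⟩, _⟩)
      · exact zero_le_one
      · exact hb1
    have hmem01 : ∀ x, u x ∈ Icc (0:ℝ) 1 := fun x => ⟨h0le x, hle1 x⟩
    have hmono : ∀ g l, g ∈ Ioc (0:ℝ) 1 → l ∈ Ioc (0:ℝ) 1 → g ≤ l → v l ⊆ v g := by
      intro g l hg hl hgl
      rcases eq_or_lt_of_le hgl with rfl | hgl'
      · exact subset_rfl
      · rw [h2 l hl]
        exact biInter_subset_of_mem ⟨hg.1.le, hgl'⟩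
    have hsub0 : ∀ g ∈ Ioc (0:ℝ) 1, v g ⊆ v 0 := by
      intro g hg
      rw [h3]
      exact (subset_biUnion_of_mem hg).trans subset_closure
    have hcut : ∀ a ∈ Ioc (0:ℝ) 1, acut u a = v a := by
      intro a ha
      ext x
      constructor
      · intro hx
        rw [h2 a ha]
        refine mem_iInter₂.2 fun g hg => ?_
        have hga : g < u x := lt_of_lt_of_le hg.2 hx
        obtain ⟨b, hb, hgb⟩ := exists_lt_of_lt_csSup (hne x) hga
        have hbS : b ∈ Ioc (0:ℝ) 1 ∧ x ∈ v b := by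
          rcases hb with rfl | hb
          · exact absurd hgb (not_lt.2 hg.1)
          · exact hb
        rcases eq_or_lt_of_le hg.1 with rfl | hg0
        · exact hsub0 b hbS.1 hbS.2
        · exact hmono g b ⟨hg0, hg.2.le.trans ha.2⟩ hbS.1 hgb.le hbS.2
      · intro hx
        exact le_csSup (hbdd x) (mem_insert_of_mem _ ⟨ha, hx⟩)
    have hsupp : {x | 0 < u x} = ⋃ g ∈ Ioc (0:ℝ) 1, v g := by
      ext x
      simp only [mem_setOf_eq, mem_iUnion₂]
      constructor
      · intro hx
        obtain ⟨b, hb, hgb⟩ := exists_lt_of_lt_csSup (hne x) hx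
        rcases hb with rfl | hb
        · exact absurd hgb (lt_irrefl 0)
        · exact ⟨b, hb.1, hb.2⟩
      · rintro ⟨g, hg, hxg⟩
        exact lt_of_lt_of_le hg.1 (le_csSup (hbdd x) (mem_insert_of_mem _ ⟨hg, hxg⟩))
    have hfsupp : fsupp u = v 0 := by
      unfold fsupp
      rw [hsupp, h3]
    have hFB : IsFuzzyBp p u := by
      refine ⟨hmem01, ?_, ?_, ?_, ?_⟩
      · obtain ⟨x, hx⟩ := (h1 1 ⟨one_pos, le_refl 1⟩).1
        exact ⟨x, le_antisymm (hle1 x)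
          (le_csSup (hbdd x) (mem_insert_of_mem _ ⟨⟨one_pos, le_refl 1⟩, hx⟩))⟩
      · rw [upperSemicontinuous_iff_isOpen_preimage]
        intro y
        have hpre : u ⁻¹' Iio y = (acut u y)ᶜ := by
          ext x; simp [acut, not_le]
        rw [hpre, isOpen_compl_iff]
        rcases le_or_gt y 0 with hy | hy
        · have : acut u y = univ := eq_univ_of_forall fun x => hy.trans (h0le x)
          rw [this]; exact isClosed_univ
        · rcases le_or_gt y 1 with hy1 | hy1
          · rw [hcut y ⟨hy, hy1⟩]
            exact (h1 y ⟨hy, hy1⟩).2.isClosed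
          · have : acut u y = ∅ := by
              ext x
              simp only [acut, mem_setOf_eq, mem_empty_iff_false, iff_false, not_le]
              exact lt_of_le_of_lt (hle1 x) hy1
            rw [this]; exact isClosed_empty
      · intro a ha
        rw [hcut a ha]
        exact (h1 a ha).2
      · refine h4.congr_fun (fun a ha => ?_) measurableSet_Ioc

        rw [hcut a ha]
    have hcutF : ∀ a ∈ Icc (0:ℝ) 1, cutF u a = v a := by
      intro a ha
      unfold cutF
      split_ifs with h0
      · subst h0; exact hfsupp
      · exact hcut a ⟨lt_of_le_of_ne ha.1 (Ne.symm h0), ha.2⟩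
    refine ⟨u, ⟨hFB, hcutF⟩, ?_⟩
    rintro u' ⟨hu', hcu'⟩
    refine fuzzy_eq_of_cuts hu'.mem01 hmem01 fun a ha => ?_
    have e1 : acut u' a = cutF u' a := (if_neg (ne_of_gt ha.1)).symm
    rw [e1, hcu' a ⟨ha.1.le, ha.2⟩, ← hcut a ha]
  · -- converse
    intro u hu
    have hcutF : ∀ a ∈ Ioc (0:ℝ) 1, cutF u a = acut u a :=
      fun a ha => if_neg (ne_of_gt ha.1)
    refine ⟨?_, ?_, ?_, ?_⟩
    · intro l hl
      rw [hcutF l hl]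
      obtain ⟨x, hx⟩ := hu.normal
      exact ⟨⟨x, show l ≤ u x by rw [hx]; exact hl.2⟩, hu.compactCuts l hl⟩
    · intro l hl
      rw [hcutF l hl]
      ext x
      simp only [mem_iInter]
      constructor
      · intro hx g hg
        rcases eq_or_lt_of_le hg.1 with rfl | hg0
        · show x ∈ cutF u 0
          rw [cutF, if_pos rfl]
          exact subset_closure (lt_of_lt_of_le hl.1 hx)
        · rw [cutF, if_neg (ne_of_gt hg0)]
          exact le_trans hg.2.le hx
      · intro hx
        by_contra hlt
        have hlt' : u x < l := not_le.1 hlt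
        set g : ℝ := (max (u x) 0 + l) / 2 with hg
        have hmaxlt : max (u x) 0 < l := max_lt hlt' hl.1
        have hg1 : max (u x) 0 < g := by
          rw [hg]; linarith
        have hg2 : g < l := by
          rw [hg]; linarith
        have hg0 : 0 < g := lt_of_le_of_lt (le_max_right _ _) hg1
        have := hx g ⟨hg0.le, hg2⟩
        rw [cutF, if_neg (ne_of_gt hg0)] at this
        exact absurd (le_trans this (le_max_left _ _)) (not_le.2 hg1)
    · rw [show cutF u 0 = fsupp u from if_pos rfl]
      unfold fsupp
      have hset : {x | 0 < u x} = ⋃ g ∈ Ioc (0:ℝ) 1, cutF u g := by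
        ext x
        rw [mem_setOf_eq, mem_iUnion₂]
        constructor
        · intro hx
          refine ⟨u x, ⟨hx, (hu.mem01 x).2⟩, ?_⟩
          rw [cutF, if_neg (ne_of_gt hx)]
          exact le_refl (u x)
        · rintro ⟨g, hg, hxg⟩
          rw [cutF, if_neg (ne_of_gt hg.1)] at hxg
          exact lt_of_lt_of_le hg.1 hxg
      rw [hset]
    · refine hu.lp.congr_fun (fun a ha => ?_) measurableSet_Ioc

      rw [hcutF a ha]

end
end
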